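/- Let (c_i)_{i≥1} be real numbers, let φ_i = [[1, 0],[c_i, 1]] ∈ SL(2,ℝ), and fix τ > 0. Then the sequence of matrices (f^{(k)}(τ))_{k≥1} is bounded if and only if every real sequence (q_k)_{k≥0} satisfying the discrete Schrödinger equation q_{k+1} − (2 + τ c_k) q_k + q_{k−1} = 0 for all k ≥ 1 is bounded. -/

import Mathlib

/-- The matrix `h^t = [[1, t],[0, 1]] ∈ SL(2,ℝ)`. -/
def hMat (t : ℝ) : Matrix (Fin 2) (Fin 2) ℝ := !![1, t; 0, 1]

/-- The kicked evolution `f^{(k)}(τ) = φ_k h^τ φ_{k-1} h^τ ⋯ φ_1 h^τ`. -/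
def kickedEvol (φ : ℕ → Matrix (Fin 2) (Fin 2) ℝ) (τ : ℝ) :
    ℕ → Matrix (Fin 2) (Fin 2) ℝ
  | 0 => 1
  | k + 1 => φ (k + 1) * hMat τ * kickedEvol φ τ k

/-- A sequence of matrices is bounded if all its entries are uniformly bounded
(equivalently, it lies in a compact subset). -/
def MatSeqBounded (f : ℕ → Matrix (Fin 2) (Fin 2) ℝ) : Prop :=
  ∃ C : ℝ, ∀ k : ℕ, 1 ≤ k → ∀ i j : Fin 2, |f k i j| ≤ C

lemma kicked_step (c : ℕ → ℝ) (φ : ℕ → Matrix (Fin 2) (Fin 2) ℝ)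
    (hφ : ∀ i : ℕ, 1 ≤ i → φ i = !![1, 0; c i, 1]) (τ : ℝ)
    (k : ℕ) (w : Fin 2 → ℝ) :
    (kickedEvol φ τ (k+1)).mulVec w 0
      = (kickedEvol φ τ k).mulVec w 0 + τ * (kickedEvol φ τ k).mulVec w 1 ∧
    (kickedEvol φ τ (k+1)).mulVec w 1
      = c (k+1) * ((kickedEvol φ τ k).mulVec w 0 + τ * (kickedEvol φ τ k).mulVec w 1)
        + (kickedEvol φ τ k).mulVec w 1 := by
  have h1 : kickedEvol φ τ (k+1) = φ (k+1) * hMat τ * kickedEvol φ τ k := rfl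
  have hφ' := hφ (k+1) (by omega)
  rw [h1, hφ']
  constructor <;>
  · simp [hMat, Matrix.mulVec, dotProduct, Matrix.mul_apply, Fin.sum_univ_two]
    ring

/-- for lower-triangular kicks `φ_i = [[1, 0],[c_i, 1]]` and fixed `τ > 0`,
the kicked evolution is bounded iff every solution of the discrete Schrödinger equation
`q_{k+1} − (2 + τ c_k) q_k + q_{k−1} = 0` (for `k ≥ 1`) is bounded. -/
theorem stmt_11 (c : ℕ → ℝ) (φ : ℕ → Matrix (Fin 2) (Fin 2) ℝ)
    (hφ : ∀ i : ℕ, 1 ≤ i → φ i = !![1, 0; c i, 1]) (τ : ℝ) (hτ : 0 < τ) :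
    MatSeqBounded (kickedEvol φ τ) ↔
      ∀ q : ℕ → ℝ,
        (∀ k : ℕ, 1 ≤ k → q (k + 1) - (2 + τ * c k) * q k + q (k - 1) = 0) →
        ∃ C : ℝ, ∀ k : ℕ, |q k| ≤ C := by
  have hτ' : τ ≠ 0 := ne_of_gt hτ
  set f := kickedEvol φ τ with hf
  constructor
  · rintro ⟨C, hC⟩ q hq
    set w : Fin 2 → ℝ := ![q 0, (q 1 - q 0) / τ] with hw
    have key : ∀ k : ℕ, (f k).mulVec w 0 = q k ∧
        (f k).mulVec w 1 = (q (k+1) - q k) / τ := by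
      intro k
      induction k with
      | zero =>
        constructor <;> simp [hf, kickedEvol, hw]
      | succ n ih =>
        obtain ⟨ih0, ih1⟩ := ih
        obtain ⟨s0, s1⟩ := kicked_step c φ hφ τ n w
        have e0 : (f (n+1)).mulVec w 0 = q (n+1) := by
          rw [s0, ih0, ih1]; field_simp; ring
        refine ⟨e0, ?_⟩
        have hrec := hq (n+1) (by omega)
        simp only [Nat.add_sub_cancel] at hrec
        rw [s1, ih0, ih1]
        field_simp
        nlinarith [hrec]
    have hC0 : 0 ≤ C := le_trans (abs_nonneg _) (hC 1 le_rfl 0 0)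
    refine ⟨max (C * (|w 0| + |w 1|)) |q 0|, fun k => ?_⟩
    rcases Nat.eq_zero_or_pos k with rfl | hk
    · exact le_max_of_le_right le_rfl
    · have hq' : q k = f k 0 0 * w 0 + f k 0 1 * w 1 := by
        rw [← (key k).1]
        simp [Matrix.mulVec, dotProduct, Fin.sum_univ_two]
      refine le_max_of_le_left ?_
      rw [hq', mul_add]
      calc |f k 0 0 * w 0 + f k 0 1 * w 1|
          ≤ |f k 0 0 * w 0| + |f k 0 1 * w 1| := abs_add_le _ _
        _ ≤ C * |w 0| + C * |w 1| := by
            rw [abs_mul, abs_mul]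
            gcongr
            · exact hC k hk 0 0
            · exact hC k hk 0 1
  · intro hs
    -- For any initial vector, the orbit under f is bounded.
    have main : ∀ a b : ℝ, ∃ D : ℝ, ∀ k : ℕ, ∀ i : Fin 2,
        |(kickedEvol φ τ k).mulVec ![a, b] i| ≤ D := by
      intro a b
      have hrec : ∀ k : ℕ, 1 ≤ k →
          (kickedEvol φ τ (k + 1)).mulVec ![a, b] 0
            - (2 + τ * c k) * (kickedEvol φ τ k).mulVec ![a, b] 0
            + (kickedEvol φ τ (k - 1)).mulVec ![a, b] 0 = 0 := by
        intro k hk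
        obtain ⟨m, rfl⟩ : ∃ m, k = m + 1 := ⟨k - 1, by omega⟩
        obtain ⟨s0, s1⟩ := kicked_step c φ hφ τ m ![a, b]
        obtain ⟨t0, _⟩ := kicked_step c φ hφ τ (m + 1) ![a, b]
        simp only [Nat.add_sub_cancel]
        linear_combination t0 + τ * s1 + (-1 - τ * c (m + 1)) * s0
      obtain ⟨D, hD⟩ := hs (fun k => (kickedEvol φ τ k).mulVec ![a, b] 0)
        (by intro k hk; simpa using hrec k hk)
      refine ⟨max D (2 * D / τ), fun k i => ?_⟩
      fin_cases i
      · exact le_max_of_le_left (hD k)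
      · show |(kickedEvol φ τ k).mulVec ![a, b] 1| ≤ max D (2 * D / τ)
        obtain ⟨s0, _⟩ := kicked_step c φ hφ τ k ![a, b]
        have h1 : (kickedEvol φ τ k).mulVec ![a, b] 1
            = ((kickedEvol φ τ (k + 1)).mulVec ![a, b] 0
              - (kickedEvol φ τ k).mulVec ![a, b] 0) / τ := by
          field_simp
          linarith [s0]
        refine le_max_of_le_right ?_
        rw [h1, abs_div, abs_of_pos hτ, div_le_div_iff_of_pos_right hτ]
        calc |(kickedEvol φ τ (k + 1)).mulVec ![a, b] 0
              - (kickedEvol φ τ k).mulVec ![a, b] 0|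
            ≤ |(kickedEvol φ τ (k + 1)).mulVec ![a, b] 0|
              + |(kickedEvol φ τ k).mulVec ![a, b] 0| := abs_sub _ _
          _ ≤ D + D := add_le_add (hD _) (hD _)
          _ = 2 * D := by ring
    obtain ⟨D₀, hD₀⟩ := main 1 0
    obtain ⟨D₁, hD₁⟩ := main 0 1
    refine ⟨max D₀ D₁, fun k _ i j => ?_⟩
    fin_cases j
    · show |f k i 0| ≤ max D₀ D₁
      have h0 : f k i 0 = (kickedEvol φ τ k).mulVec ![1, 0] i := by
        simp [Matrix.mulVec, dotProduct, Fin.sum_univ_two, hf]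
      rw [h0]
      exact le_max_of_le_left (hD₀ k i)
    · show |f k i 1| ≤ max D₀ D₁
      have h0 : f k i 1 = (kickedEvol φ τ k).mulVec ![0, 1] i := by
        simp [Matrix.mulVec, dotProduct, Fin.sum_univ_two, hf]
      rw [h0]
      exact le_max_of_le_right (hD₁ k i)
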